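/- Let n ≥ 2 and let π be a separable permutation of {1, …, n}. Then there exist two consecutive integers with consecutive images: there is an index i with 1 ≤ i ≤ n − 1 such that π(i+1) = π(i) + 1 or π(i+1) = π(i) − 1. -/

import Mathlib

/-- If `f` maps the position interval `[a, b)` injectively into the value interval
`[c, c + (b-a))`, then it maps it onto. -/
lemma sep_block_surj (n : ℕ) (f : ℕ → ℕ)
    (hinj : ∀ i j, i < n → j < n → f i = f j → i = j)
    (a b c : ℕ) (hbn : b ≤ n)
    (h1 : ∀ i, a ≤ i → i < b → c ≤ f i ∧ f i < c + (b - a)) :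
    ∀ w, w < b - a → ∃ i, a ≤ i ∧ i < b ∧ f i = c + w := by
  intro w hw
  by_contra hno
  push_neg at hno
  have hcard : (Finset.Ico a b).card ≤ ((Finset.Ico c (c + (b - a))).erase (c + w)).card := by
    apply Finset.card_le_card_of_injOn f
    · intro i hi
      rw [Finset.mem_coe, Finset.mem_Ico] at hi
      rw [Finset.mem_coe, Finset.mem_erase, Finset.mem_Ico]
      exact ⟨hno i hi.1 hi.2, (h1 i hi.1 hi.2).1, (h1 i hi.1 hi.2).2⟩
    · intro i hi j hj hij
      rw [Finset.coe_Ico, Set.mem_Ico] at hi hj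
      exact hinj i j (by omega) (by omega) hij
  have hmem : c + w ∈ Finset.Ico c (c + (b - a)) := by
    rw [Finset.mem_Ico]; omega
  rw [Finset.card_erase_of_mem hmem, Nat.card_Ico, Nat.card_Ico] at hcard
  omega

/-- From a proper block (interval of positions mapping into an equally sized interval of
values) of size `≥ 2` we obtain a bond, using the induction hypothesis. -/
lemma sep_block_bond (n : ℕ) (f : ℕ → ℕ)
    (hinj : ∀ i j, i < n → j < n → f i = f j → i = j)
    (havoid : ∀ i1 i2 i3 i4, i1 < i2 → i2 < i3 → i3 < i4 → i4 < n →
      ¬((f i2 < f i4 ∧ f i4 < f i1 ∧ f i1 < f i3) ∨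
        (f i3 < f i1 ∧ f i1 < f i4 ∧ f i4 < f i2)))
    (IH : ∀ m, m < n → 2 ≤ m → ∀ g : ℕ → ℕ,
      (∀ i, i < m → g i < m) →
      (∀ i j, i < m → j < m → g i = g j → i = j) →
      (∀ w, w < m → ∃ i, i < m ∧ g i = w) →
      (∀ i1 i2 i3 i4, i1 < i2 → i2 < i3 → i3 < i4 → i4 < m →
        ¬((g i2 < g i4 ∧ g i4 < g i1 ∧ g i1 < g i3) ∨
          (g i3 < g i1 ∧ g i1 < g i4 ∧ g i4 < g i2))) →
      ∃ i, i + 1 < m ∧ (g (i+1) = g i + 1 ∨ g i = g (i+1) + 1))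
    (a b c : ℕ) (hab : 2 ≤ b - a) (hbn : b ≤ n) (hlt : b - a < n)
    (h1 : ∀ i, a ≤ i → i < b → c ≤ f i ∧ f i < c + (b - a)) :
    ∃ i, a ≤ i ∧ i + 1 < b ∧ (f (i+1) = f i + 1 ∨ f i = f (i+1) + 1) := by
  set m := b - a with hm
  set g : ℕ → ℕ := fun j => f (a + j) - c with hg
  have hmem : ∀ j, j < m → c ≤ f (a + j) ∧ f (a + j) < c + m :=
    fun j hj => h1 (a + j) (by omega) (by omega)
  have hgb : ∀ i, i < m → g i < m := by
    intro i hi; have := hmem i hi; simp only [hg]; omega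
  have hgi : ∀ i j, i < m → j < m → g i = g j → i = j := by
    intro i j hi hj hij
    have h1 := hmem i hi; have h2 := hmem j hj
    have : f (a + i) = f (a + j) := by simp only [hg] at hij; omega
    have := hinj (a + i) (a + j) (by omega) (by omega) this
    omega
  have hgs : ∀ w, w < m → ∃ i, i < m ∧ g i = w := by
    intro w hw
    obtain ⟨i, hi1, hi2, hi3⟩ := sep_block_surj n f hinj a b c hbn h1 w hw
    refine ⟨i - a, by omega, ?_⟩
    have e : a + (i - a) = i := by omega
    simp only [hg, e]
    omega
  have hga : ∀ i1 i2 i3 i4, i1 < i2 → i2 < i3 → i3 < i4 → i4 < m →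
      ¬((g i2 < g i4 ∧ g i4 < g i1 ∧ g i1 < g i3) ∨
        (g i3 < g i1 ∧ g i1 < g i4 ∧ g i4 < g i2)) := by
    intro i1 i2 i3 i4 h12 h23 h34 h4 hpat
    have m1 := hmem i1 (by omega); have m2 := hmem i2 (by omega)
    have m3 := hmem i3 (by omega); have m4 := hmem i4 (by omega)
    have := havoid (a + i1) (a + i2) (a + i3) (a + i4)
      (by omega) (by omega) (by omega) (by omega)
    simp only [hg] at hpat
    omega
  obtain ⟨i, hi, hbond⟩ := IH m hlt hab g hgb hgi hgs hga
  have m1 := hmem i (by omega); have m2 := hmem (i+1) hi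
  refine ⟨a + i, by omega, by omega, ?_⟩
  simp only [hg] at hbond
  have e1 : a + (i + 1) = a + i + 1 := by omega
  rw [e1] at hbond m2
  omega

lemma sep_core (n : ℕ) (f : ℕ → ℕ) (h4 : 4 ≤ n)
    (hf : ∀ i, i < n → f i < n)
    (hinj : ∀ i j, i < n → j < n → f i = f j → i = j)
    (hsurj : ∀ w, w < n → ∃ i, i < n ∧ f i = w)
    (havoid : ∀ i1 i2 i3 i4, i1 < i2 → i2 < i3 → i3 < i4 → i4 < n →
      ¬((f i2 < f i4 ∧ f i4 < f i1 ∧ f i1 < f i3) ∨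
        (f i3 < f i1 ∧ f i1 < f i4 ∧ f i4 < f i2)))
    (IH : ∀ m, m < n → 2 ≤ m → ∀ g : ℕ → ℕ,
      (∀ i, i < m → g i < m) →
      (∀ i j, i < m → j < m → g i = g j → i = j) →
      (∀ w, w < m → ∃ i, i < m ∧ g i = w) →
      (∀ i1 i2 i3 i4, i1 < i2 → i2 < i3 → i3 < i4 → i4 < m →
        ¬((g i2 < g i4 ∧ g i4 < g i1 ∧ g i1 < g i3) ∨
          (g i3 < g i1 ∧ g i1 < g i4 ∧ g i4 < g i2))) →
      ∃ i, i + 1 < m ∧ (g (i+1) = g i + 1 ∨ g i = g (i+1) + 1))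
    (hnb : ∀ i, i + 1 < n → f (i+1) ≠ f i + 1 ∧ f i ≠ f (i+1) + 1)
    (p : ℕ) (hp1 : 1 ≤ p) (hpn : p + 1 < n) (hfp : f p = n - 1)
    (hj : f (p+1) = f (p-1) + 1 ∨ f (p-1) = f (p+1) + 1) : False := by
  have hne : ∀ i j, i < n → j < n → i ≠ j → f i ≠ f j :=
    fun i j hi hj hij h => hij (hinj i j hi hj h)
  rcases hj with hA | hB
  · -- Case A : f (p-1) = v, f (p+1) = v + 1
    set v := f (p - 1) with hv
    have hvb : v + 1 < n := by
      have := hf (p+1) (by omega); omega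
    have hvn : v + 1 ≠ n - 1 := by
      have := hne (p+1) p (by omega) (by omega) (by omega); omega
    have A1 : ∀ t, t < p - 1 → f t < v := by
      intro t ht
      have hav := havoid t (p-1) p (p+1) (by omega) (by omega) (by omega) hpn
      have h1 := hne t (p-1) (by omega) (by omega) (by omega)
      have h2 := hne t p (by omega) (by omega) (by omega)
      have h3 := hne t (p+1) (by omega) (by omega) (by omega)
      have h5 := hf t (by omega)
      omega
    have A2 : ∀ t s, p + 1 < t → t < s → s < n → f t < v → v < f s → False := by
      intro t s h1 h2 h3 h4' h5
      have hav := havoid (p-1) p t s (by omega) (by omega) h2 h3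
      have h6 := hne s p h3 (by omega) (by omega)
      have h7 := hf s h3
      omega
    by_cases hHH : v + 2 < n - 1
    · -- at least one "high" value exists
      obtain ⟨t2, ht2n, ht2⟩ := hsurj (v+2) (by omega)
      have ht2a : t2 ≠ p - 1 := by intro h; rw [h] at ht2; omega
      have ht2b : t2 ≠ p := by intro h; rw [h, hfp] at ht2; omega
      have ht2c : t2 ≠ p + 1 := by intro h; rw [h, hA] at ht2; omega
      have ht2big : p + 1 < t2 := by
        by_cases h : t2 < p - 1
        · exact absurd (A1 t2 h) (by omega)
        · omega
      have ht2d : t2 ≠ p + 2 := by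
        intro h
        have hb : f (p+2) ≠ f (p+1) + 1 := (hnb (p+1) (by omega)).1
        rw [h] at ht2; omega
      have hp2n : p + 2 < n := by omega
      have hfp2 : v + 1 < f (p+2) ∧ f (p+2) < n - 1 := by
        have n1 := hne (p+2) (p-1) hp2n (by omega) (by omega)
        have n2 := hne (p+2) p hp2n (by omega) (by omega)
        have n3 := hne (p+2) (p+1) hp2n (by omega) (by omega)
        have n4 := hne (p+2) t2 hp2n ht2n (by omega)
        have hb := hf (p+2) hp2n
        by_cases h : f (p+2) < v
        · exact (A2 (p+2) t2 (by omega) (by omega) ht2n h (by omega)).elim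
        · omega
      set T := Nat.findGreatest (fun t => v + 1 < f t ∧ f t < n - 1) (n-1) with hT
      have hTspec : v + 1 < f T ∧ f T < n - 1 := by
        rw [hT]; exact Nat.findGreatest_spec (P := fun t => v + 1 < f t ∧ f t < n - 1) (n := n-1) (m := p+2) (by omega) hfp2
      have hTle : T ≤ n - 1 := by
        rw [hT]; exact Nat.findGreatest_le (P := fun t => v + 1 < f t ∧ f t < n - 1) (n-1)
      have hTge : p + 2 ≤ T := by
        rw [hT]; exact Nat.le_findGreatest (P := fun t => v + 1 < f t ∧ f t < n - 1) (n := n-1) (by omega) hfp2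
      have hAll : ∀ i, p + 2 ≤ i → i ≤ T → v + 1 < f i ∧ f i < n - 1 := by
        intro i hi1 hi2
        have hiN : i < n := by omega
        have n1 := hne i (p-1) hiN (by omega) (by omega)
        have n2 := hne i p hiN (by omega) (by omega)
        have n3 := hne i (p+1) hiN (by omega) (by omega)
        have hb := hf i hiN
        by_cases h : f i < v
        · rcases eq_or_lt_of_le hi2 with h' | h'
          · rw [h'] at h; omega
          · exact (A2 i T (by omega) h' (by omega) h (by omega)).elim
        · omega
      have C1 : T + 1 - (p+2) ≤ (n-1) - (v+2) := by
        have hc := Finset.card_le_card_of_injOn (s := Finset.Ico (p+2) (T+1))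
          (t := Finset.Ico (v+2) (n-1)) f
          (fun i hi => by
            rw [Finset.mem_coe, Finset.mem_Ico] at hi
            rw [Finset.mem_coe, Finset.mem_Ico]
            have := hAll i hi.1 (by omega)
            omega)
          (fun i hi j hj hij => by
            rw [Finset.coe_Ico, Set.mem_Ico] at hi hj
            exact hinj i j (by omega) (by omega) hij)
        rw [Nat.card_Ico, Nat.card_Ico] at hc
        exact hc
      set inv : ℕ → ℕ := fun w => if h : w < n then Classical.choose (hsurj w h) else 0
        with hinvdef
      have hinv : ∀ w, w < n → inv w < n ∧ f (inv w) = w := by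
        intro w hw
        simp only [hinvdef, dif_pos hw]
        exact Classical.choose_spec (hsurj w hw)
      have C2 : (n-1) - (v+2) ≤ T + 1 - (p+2) := by
        have hc := Finset.card_le_card_of_injOn (s := Finset.Ico (v+2) (n-1))
          (t := Finset.Ico (p+2) (T+1)) inv
          (fun w hw => by
            rw [Finset.mem_coe, Finset.mem_Ico] at hw
            obtain ⟨h1, h2⟩ := hinv w (by omega)
            rw [Finset.mem_coe, Finset.mem_Ico]
            have n1 : inv w ≠ p - 1 := by intro h; rw [h] at h2; omega
            have n2 : inv w ≠ p := by intro h; rw [h, hfp] at h2; omega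
            have n3 : inv w ≠ p + 1 := by intro h; rw [h, hA] at h2; omega
            have n4 : ¬ (inv w < p - 1) := by
              intro h; have := A1 _ h; omega
            have n5 : inv w ≤ T := by
              rw [hT]
              exact Nat.le_findGreatest (P := fun t => v + 1 < f t ∧ f t < n - 1) (n := n-1) (m := inv w) (by omega) (by omega)
            omega)
          (fun w hw w' hw' h => by
            rw [Finset.coe_Ico, Set.mem_Ico] at hw hw'
            obtain ⟨_, e1⟩ := hinv w (by omega)
            obtain ⟨_, e2⟩ := hinv w' (by omega)
            rw [h] at e1; omega)
        rw [Nat.card_Ico, Nat.card_Ico] at hc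
        exact hc
      have hH2 : v + 3 ≤ n - 2 := by
        have n4 := hne (p+2) t2 hp2n ht2n (by omega)
        omega
      obtain ⟨i, hi1, hi2, hi3⟩ := sep_block_bond n f hinj havoid IH (p+2) (T+1) (v+2)
        (by omega) (by omega) (by omega)
        (fun i hi1 hi2 => by
          have := hAll i hi1 (by omega)
          omega)
      exact absurd hi3 (by have := hnb i (by omega); omega)
    · -- v = n - 3 : the three positions p-1, p, p+1 form a block of size 3
      obtain ⟨i, hi1, hi2, hi3⟩ := sep_block_bond n f hinj havoid IH (p-1) (p+2) v
        (by omega) (by omega) (by omega)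
        (fun i h1 h2 => by
          have e : i = p - 1 ∨ i = p ∨ i = p + 1 := by omega
          rcases e with e | e | e <;> subst e <;> omega)
      exact absurd hi3 (by have := hnb i (by omega); omega)
  · -- Case B : f (p-1) = v + 1, f (p+1) = v
    set v := f (p + 1) with hv
    have hvb : v + 1 < n := by
      have := hf (p-1) (by omega); omega
    have hvn : v + 1 ≠ n - 1 := by
      have := hne (p-1) p (by omega) (by omega) (by omega); omega
    have B1 : ∀ t, p + 1 < t → t < n → f t < v := by
      intro t h1 htn
      have hav := havoid (p-1) p (p+1) t (by omega) (by omega) (by omega) htn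
      have n1 := hne t (p-1) htn (by omega) (by omega)
      have n2 := hne t p htn (by omega) (by omega)
      have n3 := hne t (p+1) htn (by omega) (by omega)
      have h5 := hf t htn
      omega
    have B2 : ∀ t s, t < s → s < p → f s < v → v < f t → False := by
      intro t s h1 h2 h3 h4'
      have hav := havoid t s p (p+1) h1 h2 (by omega) hpn
      have h6 := hne t p (by omega) (by omega) (by omega)
      have h7 := hf t (by omega)
      omega
    by_cases hHH : v + 2 < n - 1
    · obtain ⟨t2, ht2n, ht2⟩ := hsurj (v+2) (by omega)
      have ht2a : t2 ≠ p - 1 := by intro h; rw [h, hB] at ht2; omega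
      have ht2b : t2 ≠ p := by intro h; rw [h, hfp] at ht2; omega
      have ht2c : t2 ≠ p + 1 := by intro h; rw [h] at ht2; omega
      have ht2small : t2 < p - 1 := by
        by_cases h : p + 1 < t2
        · exact absurd (B1 t2 h ht2n) (by omega)
        · omega
      have ht2d : t2 ≠ p - 2 := by
        intro h
        have e : p - 2 + 1 = p - 1 := by omega
        have hb := hnb (p-2) (by omega)
        rw [e] at hb
        rw [h] at ht2
        omega
      have hp3 : 3 ≤ p := by omega
      have hfp2 : v + 1 < f (p-2) ∧ f (p-2) < n - 1 := by
        have n1 := hne (p-2) (p-1) (by omega) (by omega) (by omega)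
        have n2 := hne (p-2) p (by omega) (by omega) (by omega)
        have n3 := hne (p-2) (p+1) (by omega) (by omega) (by omega)
        have n4 := hne (p-2) t2 (by omega) ht2n (by omega)
        have hb := hf (p-2) (by omega)
        by_cases h : f (p-2) < v
        · exact (B2 t2 (p-2) (by omega) (by omega) h (by omega)).elim
        · omega
      have hex : ∃ t, v + 1 < f t ∧ f t < n - 1 := ⟨p-2, hfp2⟩
      set T0 := Nat.find hex with hT0
      have hT0spec : v + 1 < f T0 ∧ f T0 < n - 1 := by
        rw [hT0]; exact Nat.find_spec hex
      have hT0le : T0 ≤ p - 2 := by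
        rw [hT0]; exact Nat.find_min' hex hfp2
      have hAll : ∀ i, T0 ≤ i → i ≤ p - 2 → v + 1 < f i ∧ f i < n - 1 := by
        intro i hi1 hi2
        have hiN : i < n := by omega
        have n1 := hne i (p-1) hiN (by omega) (by omega)
        have n2 := hne i p hiN (by omega) (by omega)
        have n3 := hne i (p+1) hiN (by omega) (by omega)
        have hb := hf i hiN
        by_cases h : f i < v
        · rcases eq_or_lt_of_le hi1 with h' | h'
          · rw [h'] at hT0spec; omega
          · exact (B2 T0 i h' (by omega) h (by omega)).elim
        · omega
      have C1 : (p-1) - T0 ≤ (n-1) - (v+2) := by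
        have hc := Finset.card_le_card_of_injOn (s := Finset.Ico T0 (p-1))
          (t := Finset.Ico (v+2) (n-1)) f
          (fun i hi => by
            rw [Finset.mem_coe, Finset.mem_Ico] at hi
            rw [Finset.mem_coe, Finset.mem_Ico]
            have := hAll i hi.1 (by omega)
            omega)
          (fun i hi j hj hij => by
            rw [Finset.coe_Ico, Set.mem_Ico] at hi hj
            exact hinj i j (by omega) (by omega) hij)
        rw [Nat.card_Ico, Nat.card_Ico] at hc
        exact hc
      set inv : ℕ → ℕ := fun w => if h : w < n then Classical.choose (hsurj w h) else 0
        with hinvdef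
      have hinv : ∀ w, w < n → inv w < n ∧ f (inv w) = w := by
        intro w hw
        simp only [hinvdef, dif_pos hw]
        exact Classical.choose_spec (hsurj w hw)
      have C2 : (n-1) - (v+2) ≤ (p-1) - T0 := by
        have hc := Finset.card_le_card_of_injOn (s := Finset.Ico (v+2) (n-1))
          (t := Finset.Ico T0 (p-1)) inv
          (fun w hw => by
            rw [Finset.mem_coe, Finset.mem_Ico] at hw
            obtain ⟨h1, h2⟩ := hinv w (by omega)
            rw [Finset.mem_coe, Finset.mem_Ico]
            have n1 : inv w ≠ p - 1 := by intro h; rw [h, hB] at h2; omega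
            have n2 : inv w ≠ p := by intro h; rw [h, hfp] at h2; omega
            have n3 : inv w ≠ p + 1 := by intro h; rw [h] at h2; omega
            have n4 : ¬ (p + 1 < inv w) := by
              intro h; have := B1 _ h h1; omega
            have n5 : T0 ≤ inv w := by
              rw [hT0]; exact Nat.find_min' hex (by omega)
            omega)
          (fun w hw w' hw' h => by
            rw [Finset.coe_Ico, Set.mem_Ico] at hw hw'
            obtain ⟨_, e1⟩ := hinv w (by omega)
            obtain ⟨_, e2⟩ := hinv w' (by omega)
            rw [h] at e1; omega)
        rw [Nat.card_Ico, Nat.card_Ico] at hc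
        exact hc
      have hH2 : v + 3 ≤ n - 2 := by
        have n4 := hne (p-2) t2 (by omega) ht2n (by omega)
        omega
      obtain ⟨i, hi1, hi2, hi3⟩ := sep_block_bond n f hinj havoid IH T0 (p-1) (v+2)
        (by omega) (by omega) (by omega)
        (fun i hi1 hi2 => by
          have := hAll i hi1 (by omega)
          omega)
      exact absurd hi3 (by have := hnb i (by omega); omega)
    · obtain ⟨i, hi1, hi2, hi3⟩ := sep_block_bond n f hinj havoid IH (p-1) (p+2) v
        (by omega) (by omega) (by omega)
        (fun i h1 h2 => by
          have e : i = p - 1 ∨ i = p ∨ i = p + 1 := by omega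
          rcases e with e | e | e <;> subst e <;> omega)
      exact absurd hi3 (by have := hnb i (by omega); omega)

lemma sep_nat_main : ∀ n : ℕ, 2 ≤ n → ∀ f : ℕ → ℕ,
    (∀ i, i < n → f i < n) →
    (∀ i j, i < n → j < n → f i = f j → i = j) →
    (∀ w, w < n → ∃ i, i < n ∧ f i = w) →
    (∀ i1 i2 i3 i4, i1 < i2 → i2 < i3 → i3 < i4 → i4 < n →
      ¬((f i2 < f i4 ∧ f i4 < f i1 ∧ f i1 < f i3) ∨
        (f i3 < f i1 ∧ f i1 < f i4 ∧ f i4 < f i2))) →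
    ∃ i, i + 1 < n ∧ (f (i+1) = f i + 1 ∨ f i = f (i+1) + 1) := by
  intro n
  induction n using Nat.strong_induction_on with
  | _ n IH =>
  intro hn f hf hinj hsurj havoid
  by_cases hsm : n < 4
  · have h0 := hf 0 (by omega)
    have h1 := hf 1 (by omega)
    have d01 : f 0 ≠ f 1 := fun h => by have := hinj 0 1 (by omega) (by omega) h; omega
    rcases (by omega : n = 2 ∨ n = 3) with h | h
    · subst h
      refine ⟨0, by omega, ?_⟩
      show f 1 = f 0 + 1 ∨ f 0 = f 1 + 1
      omega
    · subst h
      have h2 := hf 2 (by omega)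
      have d02 : f 0 ≠ f 2 := fun h => by have := hinj 0 2 (by omega) (by omega) h; omega
      have d12 : f 1 ≠ f 2 := fun h => by have := hinj 1 2 (by omega) (by omega) h; omega
      have key : (f 1 = f 0 + 1 ∨ f 0 = f 1 + 1) ∨ (f 2 = f 1 + 1 ∨ f 1 = f 2 + 1) := by
        omega
      rcases key with h | h
      · exact ⟨0, by omega, h⟩
      · refine ⟨1, by omega, ?_⟩
        show f 2 = f 1 + 1 ∨ f 1 = f 2 + 1
        exact h
  · -- n ≥ 4
    by_contra hnb
    push_neg at hnb
    have hne : ∀ i j, i < n → j < n → i ≠ j → f i ≠ f j :=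
      fun i j hi hj hij h => hij (hinj i j hi hj h)
    obtain ⟨p, hp, hfp⟩ := hsurj (n-1) (by omega)
    set g : ℕ → ℕ := fun i => if i < p then f i else f (i+1) with hgdef
    have hge : ∀ i, i < p → g i = f i := by intro i h; simp only [hgdef, if_pos h]
    have hge' : ∀ i, ¬ i < p → g i = f (i+1) := by intro i h; simp only [hgdef, if_neg h]
    have hgb : ∀ i, i < n - 1 → g i < n - 1 := by
      intro i hi
      by_cases h : i < p
      · rw [hge i h]
        have := hf i (by omega)
        have := hne i p (by omega) hp (by omega)
        omega
      · rw [hge' i h]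
        have := hf (i+1) (by omega)
        have := hne (i+1) p (by omega) hp (by omega)
        omega
    have hgi : ∀ i j, i < n - 1 → j < n - 1 → g i = g j → i = j := by
      intro i j hi hj hij
      by_cases hi' : i < p <;> by_cases hj' : j < p
      · rw [hge i hi', hge j hj'] at hij
        exact hinj i j (by omega) (by omega) hij
      · rw [hge i hi', hge' j hj'] at hij
        have := hinj i (j+1) (by omega) (by omega) hij
        omega
      · rw [hge' i hi', hge j hj'] at hij
        have := hinj (i+1) j (by omega) (by omega) hij
        omega
      · rw [hge' i hi', hge' j hj'] at hij
        have := hinj (i+1) (j+1) (by omega) (by omega) hij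
        omega
    have hgs : ∀ w, w < n - 1 → ∃ i, i < n - 1 ∧ g i = w := by
      intro w hw
      obtain ⟨j, hj, hfj⟩ := hsurj w (by omega)
      have hjp : j ≠ p := by intro h; rw [h, hfp] at hfj; omega
      by_cases h : j < p
      · exact ⟨j, by omega, by rw [hge j h]; exact hfj⟩
      · refine ⟨j - 1, by omega, ?_⟩
        rw [hge' (j-1) (by omega)]
        have e : j - 1 + 1 = j := by omega
        rw [e]
        exact hfj
    have hga : ∀ i1 i2 i3 i4, i1 < i2 → i2 < i3 → i3 < i4 → i4 < n - 1 →
        ¬((g i2 < g i4 ∧ g i4 < g i1 ∧ g i1 < g i3) ∨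
          (g i3 < g i1 ∧ g i1 < g i4 ∧ g i4 < g i2)) := by
      intro i1 i2 i3 i4 h12 h23 h34 hlt hpat
      set e : ℕ → ℕ := fun i => if i < p then i else i + 1 with hedef
      have hev : ∀ i, g i = f (e i) := by
        intro i
        by_cases h : i < p
        · rw [hge i h]; simp only [hedef, if_pos h]
        · rw [hge' i h]; simp only [hedef, if_neg h]
      have hmono : ∀ i j, i < j → e i < e j := by
        intro i j hij; simp only [hedef]; split_ifs <;> omega
      have hbnd : e i4 < n := by simp only [hedef]; split_ifs <;> omega
      apply havoid (e i1) (e i2) (e i3) (e i4) (hmono _ _ h12) (hmono _ _ h23)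
        (hmono _ _ h34) hbnd
      rw [hev i1, hev i2, hev i3, hev i4] at hpat
      exact hpat
    obtain ⟨i, hi, hbond⟩ := IH (n-1) (by omega) (by omega) g hgb hgi hgs hga
    rcases lt_trichotomy (i+1) p with h | h | h
    · rw [hge i (by omega), hge (i+1) h] at hbond
      have := hnb i (by omega)
      omega
    · -- junction: p = i + 1
      rw [hge i (by omega), hge' (i+1) (by omega)] at hbond
      have e2 : i + 1 + 1 = p + 1 := by omega
      have e1 : i = p - 1 := by omega
      rw [e2, e1] at hbond
      exact sep_core n f (by omega) hf hinj hsurj havoid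
        (fun m hm h2 => IH m hm h2) hnb p (by omega) (by omega) hfp hbond
    · rw [hge' i (by omega), hge' (i+1) (by omega)] at hbond
      have := hnb (i+1) (by omega)
      omega

theorem separable_has_consecutive_images (n : ℕ) (hn : 2 ≤ n) (π : Equiv.Perm (Fin n))
    (hsep : ¬ ∃ i₁ i₂ i₃ i₄ : Fin n, i₁ < i₂ ∧ i₂ < i₃ ∧ i₃ < i₄ ∧
        ((π i₂ < π i₄ ∧ π i₄ < π i₁ ∧ π i₁ < π i₃) ∨
         (π i₃ < π i₁ ∧ π i₁ < π i₄ ∧ π i₄ < π i₂))) :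
    ∃ (i : Fin n) (h : i.val + 1 < n),
      (π ⟨i.val + 1, h⟩).val = (π i).val + 1 ∨
      (π i).val = (π ⟨i.val + 1, h⟩).val + 1 := by
  set f : ℕ → ℕ := fun i => if h : i < n then (π ⟨i, h⟩).val else 0 with hfdef
  have hfe : ∀ i (h : i < n), f i = (π ⟨i, h⟩).val := by
    intro i h; simp only [hfdef, dif_pos h]
  have hf : ∀ i, i < n → f i < n := by
    intro i h; rw [hfe i h]; exact (π ⟨i, h⟩).isLt
  have hinj : ∀ i j, i < n → j < n → f i = f j → i = j := by
    intro i j hi hj hij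
    rw [hfe i hi, hfe j hj] at hij
    have := π.injective (Fin.val_injective hij)
    exact congrArg Fin.val this
  have hsurj : ∀ w, w < n → ∃ i, i < n ∧ f i = w := by
    intro w hw
    refine ⟨(π.symm ⟨w, hw⟩).val, (π.symm ⟨w, hw⟩).isLt, ?_⟩
    rw [hfe _ (π.symm ⟨w, hw⟩).isLt]
    simp
  have havoid : ∀ i1 i2 i3 i4, i1 < i2 → i2 < i3 → i3 < i4 → i4 < n →
      ¬((f i2 < f i4 ∧ f i4 < f i1 ∧ f i1 < f i3) ∨
        (f i3 < f i1 ∧ f i1 < f i4 ∧ f i4 < f i2)) := by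
    intro i1 i2 i3 i4 h12 h23 h34 h4 hpat
    have h1 : i1 < n := by omega
    have h2 : i2 < n := by omega
    have h3 : i3 < n := by omega
    rw [hfe i1 h1, hfe i2 h2, hfe i3 h3, hfe i4 h4] at hpat
    exact hsep ⟨⟨i1, h1⟩, ⟨i2, h2⟩, ⟨i3, h3⟩, ⟨i4, h4⟩,
      Fin.mk_lt_mk.mpr h12, Fin.mk_lt_mk.mpr h23, Fin.mk_lt_mk.mpr h34,
      by simp only [Fin.lt_def]; exact hpat⟩
  obtain ⟨i, hi, hbond⟩ := sep_nat_main n hn f hf hinj hsurj havoid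
  refine ⟨⟨i, by omega⟩, hi, ?_⟩
  rw [← hfe i (by omega), ← hfe (i+1) hi]
  exact hbond
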